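/- arXiv:2507.05473 — 5 statements merged into one kernel-verified Lean document; each statement's English description precedes it below -/
import Mathlib

section
/- The chromatic polynomial of the complete bipartite graph K_{q,q} evaluated at n equals the sum over all set partitions Π of a q-element set of the product (n)_{|Π|} · (n − |Π|)^q, where (n)_i = n(n−1)···(n−i+1) is the falling factorial. -/
open Finset

namespace Stmt4Aux

variable {q n : ℕ}

instance kerDec (g : Fin q → Fin n) : DecidableRel (Setoid.ker g).r :=
  fun a b => inferInstanceAs (Decidable (g a = g b))

/-- The kernel finpartition of a function. -/
noncomputable def ker (g : Fin q → Fin n) : Finpartition (univ : Finset (Fin q)) :=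
  Finpartition.ofSetoid (Setoid.ker g)

lemma mem_part_ker {g : Fin q → Fin n} {a b : Fin q} :
    b ∈ (ker g).part a ↔ g a = g b :=
  Finpartition.mem_part_ofSetoid_iff_rel

lemma parts_eq_image_part (P : Finpartition (univ : Finset (Fin q))) :
    P.parts = univ.image (fun a => P.part a) := by
  ext t
  simp only [mem_image, mem_univ, true_and]
  constructor
  · intro ht
    obtain ⟨x, hx⟩ := P.nonempty_of_mem_parts ht
    exact ⟨x, P.part_eq_of_mem ht hx⟩
  · rintro ⟨a, rfl⟩
    exact P.part_mem.mpr (mem_univ a)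

lemma ker_eq_of_part_eq {g : Fin q → Fin n} {P : Finpartition (univ : Finset (Fin q))}
    (h : ∀ a, (ker g).part a = P.part a) : ker g = P := by
  ext1
  rw [parts_eq_image_part (ker g), parts_eq_image_part P]
  exact image_congr (fun a _ => h a)

lemma card_parts_ker (g : Fin q → Fin n) :
    (ker g).parts.card = (univ.image g).card := by
  classical
  have h1 : (ker g).parts = univ.image (fun a => (univ.filter fun b => g a = g b)) := rfl
  have h2 : (ker g).parts = (univ.image g).image (fun c => (univ.filter fun b => c = g b)) := by
    rw [h1, image_image]
    rfl
  rw [h2]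
  apply card_image_of_injOn
  intro c hc c' hc' hcc
  simp only [coe_image, Set.mem_image] at hc hc'
  obtain ⟨a, -, rfl⟩ := hc
  simp only at hcc
  have : a ∈ univ.filter fun b => g a = g b := by simp
  rw [hcc] at this
  have := mem_filter.mp this
  exact this.2.symm


noncomputable def fiberEquiv (P : Finpartition (univ : Finset (Fin q))) :
    {g : Fin q → Fin n // ker g = P} ≃ (↥P.parts ↪ Fin n) where
  toFun gp := ⟨fun t => gp.1 ((t : Finset (Fin q)).min' (P.nonempty_of_mem_parts t.2)), by
    rintro ⟨t, ht⟩ ⟨u, hu⟩ h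
    simp only at h
    have hm : u.min' (P.nonempty_of_mem_parts hu) ∈
        (ker gp.1).part (t.min' (P.nonempty_of_mem_parts ht)) := mem_part_ker.mpr h
    rw [gp.2] at hm
    rw [P.part_eq_of_mem ht (t.min'_mem _)] at hm
    exact Subtype.ext (P.eq_of_mem_parts ht hu hm (u.min'_mem _))⟩
  invFun e := ⟨fun a => e ⟨P.part a, P.part_mem.mpr (mem_univ a)⟩, by
    apply ker_eq_of_part_eq
    intro a
    ext b
    rw [mem_part_ker]
    constructor
    · intro hab
      have h2 : P.part a = P.part b := Subtype.ext_iff.mp (e.injective hab)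
      exact (P.mem_part_iff_part_eq_part (mem_univ b) (mem_univ a)).mpr h2.symm
    · intro hb
      have h2 : P.part b = P.part a :=
        (P.mem_part_iff_part_eq_part (mem_univ b) (mem_univ a)).mp hb
      exact congrArg e (Subtype.ext h2.symm)⟩
  left_inv := fun gp => by
    apply Subtype.ext
    funext a
    show gp.1 ((P.part a).min' _) = gp.1 a
    have hmin : (P.part a).min' (P.nonempty_of_mem_parts (P.part_mem.mpr (mem_univ a))) ∈
        (ker gp.1).part a := by
      rw [gp.2]; exact (P.part a).min'_mem _
    exact (mem_part_ker.mp hmin).symm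
  right_inv := fun e => by
    apply DFunLike.ext
    rintro ⟨t, ht⟩
    simp only [Function.Embedding.coeFn_mk]
    exact congrArg e (Subtype.ext (P.part_eq_of_mem ht (t.min'_mem _)))

lemma card_fiber (P : Finpartition (univ : Finset (Fin q))) :
    Nat.card {g : Fin q → Fin n // ker g = P} = n.descFactorial P.parts.card := by
  classical
  rw [Nat.card_congr (fiberEquiv P), Nat.card_eq_fintype_card, Fintype.card_embedding_eq,
    Fintype.card_fin, Fintype.card_coe]

lemma card_parts_ker_le (g : Fin q → Fin n) : (ker g).parts.card ≤ n := by
  classical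
  rw [card_parts_ker]
  simpa using card_le_card (subset_univ (univ.image g))

lemma card_avoid (g : Fin q → Fin n) :
    Fintype.card {h : Fin q → Fin n // ∀ a b, g a ≠ h b} = (n - (ker g).parts.card) ^ q := by
  classical
  have e : {h : Fin q → Fin n // ∀ a b, g a ≠ h b}
      ≃ (Fin q → {c : Fin n // ∀ a, g a ≠ c}) :=
    (Equiv.subtypeEquivRight fun h => forall_comm).trans (Equiv.subtypePiEquivPi (p := fun _ c => ∀ a, g a ≠ c))
  rw [Fintype.card_congr e, Fintype.card_fun, Fintype.card_fin]
  congr 1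
  rw [Fintype.card_subtype, card_parts_ker]
  have : (univ.filter fun c => ∀ a, g a ≠ c) = univ \ univ.image g := by
    ext c
    simp [eq_comm]
  rw [this, card_sdiff_of_subset (subset_univ _), card_univ, Fintype.card_fin]

end Stmt4Aux

open Stmt4Aux in
/-- The chromatic polynomial of `K_{q,q}` evaluated at `n` equals the sum over all set
partitions `Π` of a `q`-element set of `(n)_{|Π|} · (n - |Π|)^q`. -/
theorem stmt4 (q n : ℕ) :
    (Nat.card {f : Fin q ⊕ Fin q → Fin n //
        ∀ u v, (completeBipartiteGraph (Fin q) (Fin q)).Adj u v → f u ≠ f v} : ℤ)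
      = ∑ P : Finpartition (Finset.univ : Finset (Fin q)),
          (descPochhammer ℤ P.parts.card).eval (n : ℤ) * ((n : ℤ) - P.parts.card) ^ q := by
  classical
  have e1 : {f : Fin q ⊕ Fin q → Fin n //
        ∀ u v, (completeBipartiteGraph (Fin q) (Fin q)).Adj u v → f u ≠ f v}
      ≃ Σ g : Fin q → Fin n, {h : Fin q → Fin n // ∀ a b, g a ≠ h b} :=
    { toFun := fun f => ⟨fun a => f.1 (Sum.inl a), fun b => f.1 (Sum.inr b),
        fun a b => f.2 (Sum.inl a) (Sum.inr b) (by simp)⟩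
      invFun := fun x => ⟨Sum.elim x.1 x.2.1, by
        rintro (a | a) (b | b) hadj <;> simp only [completeBipartiteGraph] at hadj <;>
          simp only [Sum.elim_inl, Sum.elim_inr] at *
        · simp at hadj
        · exact x.2.2 a b
        · exact fun hc => x.2.2 b a hc.symm
        · simp at hadj⟩
      left_inv := fun f => Subtype.ext (funext fun u => by cases u <;> rfl)
      right_inv := fun x => rfl }
  rw [Nat.card_congr e1, Nat.card_eq_fintype_card, Fintype.card_sigma]
  have key : ∀ g : Fin q → Fin n, (Fintype.card {h : Fin q → Fin n // ∀ a b, g a ≠ h b} : ℤ)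
      = ((n : ℤ) - ((ker g).parts.card : ℤ)) ^ q := by
    intro g
    rw [card_avoid g, Nat.cast_pow, Nat.cast_sub (card_parts_ker_le g)]
  rw [Nat.cast_sum]
  simp only [key]
  rw [← Finset.sum_fiberwise' univ ker (fun P => ((n : ℤ) - (P.parts.card : ℤ)) ^ q)]
  refine Finset.sum_congr rfl fun P _ => ?_
  rw [Finset.sum_const, ← Fintype.card_subtype, ← Nat.card_eq_fintype_card, card_fiber,
    nsmul_eq_mul, descPochhammer_eval_eq_descFactorial]
end

section
/- The number of proper n-colorings of the Cartesian product graph K_q × P_2 equals (n)_q · Σ_{a=0}^{q} (−1)^a C(q,a) (n−a)_{q−a}, where (m)_k denotes the falling factorial m(m−1)···(m−k+1). -/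
open Finset

/-- Embeddings agreeing with `g` on `A` correspond to embeddings of the complement. -/
noncomputable def fiberEquiv (q n : ℕ) (g : Fin q ↪ Fin n) (A : Finset (Fin q)) :
    {h : Fin q ↪ Fin n // ∀ v ∈ A, h v = g v} ≃
      ({v : Fin q // v ∉ A} ↪ {c : Fin n // c ∉ A.image g}) where
  toFun h := ⟨fun v => ⟨h.1 v.1, by
      intro hc
      obtain ⟨w, hw, hgw⟩ := Finset.mem_image.mp hc
      have : h.1 w = h.1 v.1 := by rw [h.2 w hw, hgw]
      exact v.2 (h.1.injective this ▸ hw)⟩, by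
    intro a b hab
    exact Subtype.ext (h.1.injective (congrArg Subtype.val hab))⟩
  invFun k := ⟨⟨fun v => if hv : v ∈ A then g v else (k ⟨v, hv⟩).1, by
      intro a b hab
      dsimp only at hab
      by_cases ha : a ∈ A <;> by_cases hb : b ∈ A <;> simp only [ha, hb, dif_pos, dif_neg] at hab
      · exact g.injective hab
      · exact absurd (Finset.mem_image.mpr ⟨a, ha, hab⟩) (k ⟨b, hb⟩).2
      · exact absurd (Finset.mem_image.mpr ⟨b, hb, hab.symm⟩) (k ⟨a, ha⟩).2
      · exact congrArg Subtype.val (k.injective (Subtype.ext hab))⟩, by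
    intro v hv; exact dif_pos hv⟩
  left_inv h := by
    apply Subtype.ext; apply Function.Embedding.ext
    intro v
    by_cases hv : v ∈ A <;> simp [hv, h.2] <;> rfl
  right_inv k := by
    apply Function.Embedding.ext
    intro v
    apply Subtype.ext
    simp [v.2]
    exact dif_neg v.2

theorem card_fiber (q n : ℕ) (g : Fin q ↪ Fin n) (A : Finset (Fin q)) :
    Nat.card {h : Fin q ↪ Fin n // ∀ v ∈ A, h v = g v}
      = (n - A.card).descFactorial (q - A.card) := by
  rw [Nat.card_congr (fiberEquiv q n g A), Nat.card_eq_fintype_card,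
    Fintype.card_embedding_eq]
  congr 1
  · rw [Fintype.card_subtype_compl, Fintype.card_fin, Fintype.card_coe,
      Finset.card_image_of_injective A g.injective]
  · rw [Fintype.card_subtype_compl, Fintype.card_fin, Fintype.card_coe]


theorem fiber_count (q n : ℕ) (g : Fin q ↪ Fin n) :
    (Nat.card {h : Fin q ↪ Fin n // ∀ v, h v ≠ g v} : ℤ)
      = ∑ a ∈ Finset.range (q + 1),
          (-1 : ℤ) ^ a * (q.choose a : ℤ) * ((n - a).descFactorial (q - a) : ℤ) := by
  classical
  have cardsub : ∀ (P : (Fin q ↪ Fin n) → Prop) [DecidablePred P],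
      (Nat.card {h : Fin q ↪ Fin n // P h} : ℤ)
        = ∑ h : Fin q ↪ Fin n, if P h then (1 : ℤ) else 0 := by
    intro P _
    rw [Nat.card_eq_fintype_card, Fintype.card_subtype, Finset.sum_boole]
  have filtpow : ∀ s : Finset (Fin q),
      univ.filter (fun A => A ⊆ s) = s.powerset := by
    intro s; ext A; simp
  have hc : ∀ (h : Fin q ↪ Fin n) (A : Finset (Fin q)),
      (∀ v ∈ A, h v = g v) ↔ A ⊆ univ.filter (fun v => h v = g v) := by
    intro h A; simp [Finset.subset_iff]
  have hemp : ∀ (h : Fin q ↪ Fin n),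
      (univ.filter (fun v => h v = g v) = ∅) ↔ (∀ v, h v ≠ g v) := by
    intro h; simp [Finset.filter_eq_empty_iff]
  have key : ∑ A ∈ (univ : Finset (Fin q)).powerset,
        (-1 : ℤ) ^ A.card * (Nat.card {h : Fin q ↪ Fin n // ∀ v ∈ A, h v = g v} : ℤ)
      = (Nat.card {h : Fin q ↪ Fin n // ∀ v, h v ≠ g v} : ℤ) := by
    simp_rw [cardsub]
    rw [Finset.powerset_univ]
    simp_rw [Finset.mul_sum, mul_ite, mul_one, mul_zero]
    rw [Finset.sum_comm]
    simp_rw [hc, ← Finset.sum_filter, filtpow, Finset.sum_powerset_neg_one_pow_card, hemp]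
    simp [Finset.sum_filter]
  rw [← key]
  rw [Finset.powerset_card_disjiUnion]; erw [Finset.sum_disjiUnion]; rw [Finset.card_fin]
  refine Finset.sum_congr rfl fun a _ => ?_
  have : ∀ A ∈ Finset.powersetCard a (univ : Finset (Fin q)),
      (-1 : ℤ) ^ A.card * (Nat.card {h : Fin q ↪ Fin n // ∀ v ∈ A, h v = g v} : ℤ)
        = (-1 : ℤ) ^ a * ((n - a).descFactorial (q - a) : ℤ) := by
    intro A hA
    have hcard : A.card = a := (Finset.mem_powersetCard.mp hA).2
    rw [card_fiber, hcard]
  rw [Finset.sum_congr rfl this, Finset.sum_const, Finset.card_powersetCard, Finset.card_fin,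
    nsmul_eq_mul]

  ring

def colorEquiv (q n : ℕ) :
    {f : Fin q × Fin 2 → Fin n //
        ∀ u v, ((⊤ : SimpleGraph (Fin q)).boxProd (SimpleGraph.pathGraph 2)).Adj u v →
          f u ≠ f v} ≃
      {p : (Fin q ↪ Fin n) × (Fin q ↪ Fin n) // ∀ v, p.1 v ≠ p.2 v} where
  toFun f := ⟨(⟨fun v => f.1 (v, 0), fun a b hab => by
      by_contra hne
      exact f.2 (a, 0) (b, 0) (SimpleGraph.boxProd_adj_left.mpr (by simpa using hne)) hab⟩,
    ⟨fun v => f.1 (v, 1), fun a b hab => by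
      by_contra hne
      exact f.2 (a, 1) (b, 1) (SimpleGraph.boxProd_adj_left.mpr (by simpa using hne)) hab⟩),
    fun v => f.2 (v, 0) (v, 1)
      (SimpleGraph.boxProd_adj_right.mpr (SimpleGraph.pathGraph_adj.mpr (Or.inl rfl)))⟩
  invFun p := ⟨fun x => if x.2 = 0 then p.1.1 x.1 else p.1.2 x.1, by
    rintro ⟨u1, u2⟩ ⟨v1, v2⟩ hadj heq
    rw [SimpleGraph.boxProd_adj] at hadj
    rcases hadj with ⟨h1, h2⟩ | ⟨h1, h2⟩
    · subst h2
      have hne : u1 ≠ v1 := by simpa using h1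
      dsimp only at heq
      split_ifs at heq
      · exact hne (p.1.1.injective heq)
      · exact hne (p.1.2.injective heq)
    · subst h2
      have hne : u2 ≠ v2 := h1.ne
      have h2cases : ∀ a b : Fin 2, a ≠ b → (a = 0 ∧ b = 1) ∨ (a = 1 ∧ b = 0) := by decide
      rcases h2cases u2 v2 hne with ⟨ha, hb⟩ | ⟨ha, hb⟩ <;> subst ha <;> subst hb <;>
        simp only [if_pos rfl, if_neg (by decide : (1 : Fin 2) ≠ 0)] at heq
      · exact p.2 u1 heq
      · exact p.2 u1 heq.symm⟩
  left_inv f := by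
    apply Subtype.ext
    funext x
    obtain ⟨x1, x2⟩ := x
    have : x2 = 0 ∨ x2 = 1 := by omega
    rcases this with h | h <;> subst h <;> simp <;> rfl
  right_inv p := by
    apply Subtype.ext
    ext v <;> simp

theorem stmt5' (q n : ℕ) :
    (Nat.card {f : Fin q × Fin 2 → Fin n //
        ∀ u v, ((⊤ : SimpleGraph (Fin q)).boxProd (SimpleGraph.pathGraph 2)).Adj u v →
          f u ≠ f v} : ℤ)
      = (n.descFactorial q : ℤ) *
          ∑ a ∈ Finset.range (q + 1),
            (-1 : ℤ) ^ a * (q.choose a : ℤ) * ((n - a).descFactorial (q - a) : ℤ) := by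
  classical
  have fiber_count' : ∀ g : Fin q ↪ Fin n,
      (Nat.card {h : Fin q ↪ Fin n // ∀ v, g v ≠ h v} : ℤ)
        = ∑ a ∈ Finset.range (q + 1),
            (-1 : ℤ) ^ a * (q.choose a : ℤ) * ((n - a).descFactorial (q - a) : ℤ) := by
    intro g
    rw [Nat.card_congr (Equiv.subtypeEquivRight (q := fun h : Fin q ↪ Fin n => ∀ v, h v ≠ g v)
      (fun h => by simp [ne_comm]))]
    exact fiber_count q n g
  rw [Nat.card_congr ((colorEquiv q n).trans
      (Equiv.subtypeProdEquivSigmaSubtype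
        (fun g h : Fin q ↪ Fin n => ∀ v, g v ≠ h v)))]
  rw [Nat.card_eq_fintype_card, Fintype.card_sigma, Nat.cast_sum]
  have : ∀ g : Fin q ↪ Fin n, (Fintype.card {h : Fin q ↪ Fin n // ∀ v, g v ≠ h v} : ℤ)
      = ∑ a ∈ Finset.range (q + 1),
          (-1 : ℤ) ^ a * (q.choose a : ℤ) * ((n - a).descFactorial (q - a) : ℤ) := by
    intro g; rw [← Nat.card_eq_fintype_card]; exact fiber_count' g
  rw [Finset.sum_congr rfl (fun g _ => this g), Finset.sum_const, Finset.card_univ,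
    Fintype.card_embedding_eq, Fintype.card_fin, Fintype.card_fin, nsmul_eq_mul]

/-- The number of proper `n`-colorings of the Cartesian (box) product `K_q × P_2` equals
`(n)_q · Σ_{a=0}^{q} (-1)^a C(q,a) (n-a)_{q-a}`. -/
theorem stmt5 (q n : ℕ) :
    (Nat.card {f : Fin q × Fin 2 → Fin n //
        ∀ u v, ((⊤ : SimpleGraph (Fin q)).boxProd (SimpleGraph.pathGraph 2)).Adj u v →
          f u ≠ f v} : ℤ)
      = (descPochhammer ℤ q).eval (n : ℤ) *
          ∑ a ∈ Finset.range (q + 1),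
            (-1 : ℤ) ^ a * (q.choose a : ℤ) * (descPochhammer ℤ (q - a)).eval ((n : ℤ) - a) := by
  rw [stmt5']
  rcases le_or_gt q n with hqn | hqn
  · rw [descPochhammer_eval_eq_descFactorial]
    congr 1
    refine Finset.sum_congr rfl fun a ha => ?_
    have haq : a ≤ q := Nat.lt_succ_iff.mp (Finset.mem_range.mp ha)
    have han : a ≤ n := le_trans haq hqn
    have : ((n : ℤ) - a) = ((n - a : ℕ) : ℤ) := by
      rw [Nat.cast_sub han]
    rw [this, descPochhammer_eval_eq_descFactorial]
  · have h1 : n.descFactorial q = 0 := Nat.descFactorial_eq_zero_iff_lt.mpr hqn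
    have h2 : (descPochhammer ℤ q).eval (n : ℤ) = 0 := by
      rw [descPochhammer_eval_eq_descFactorial, h1, Nat.cast_zero]
    rw [h1, h2, Nat.cast_zero, zero_mul, zero_mul]
end

section
/- More generally, the chromatic polynomial of K_q × P_m (for m ≥ 1) equals (n)_q · (g_q(n))^{m−1}, where g_q(n) = Σ_{a=0}^{q} (−1)^a C(q,a) (n−a)_{q−a}. -/
open Finset

private noncomputable def gsum (q n : ℕ) : ℤ :=
  ∑ a ∈ Finset.range (q + 1),
    (-1 : ℤ) ^ a * (q.choose a : ℤ) * (descPochhammer ℤ (q - a)).eval ((n : ℤ) - a)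

/-- Number of injective maps agreeing with an injective `f` on a set `S`. -/
private lemma card_extend (q n : ℕ) (f : Fin q → Fin n) (hf : Function.Injective f)
    (S : Finset (Fin q)) :
    Nat.card {g : Fin q → Fin n // Function.Injective g ∧ ∀ i ∈ S, g i = f i}
      = (n - S.card).descFactorial (q - S.card) := by
  classical
  have e : {g : Fin q → Fin n // Function.Injective g ∧ ∀ i ∈ S, g i = f i}
      ≃ ({i : Fin q // i ∉ S} ↪ {y : Fin n // y ∉ S.image f}) := by
    refine ⟨fun g => ⟨fun i => ⟨g.1 i.1, ?_⟩, ?_⟩, fun e =>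
      ⟨fun i => if h : i ∈ S then f i else (e ⟨i, h⟩).1, ?_, ?_⟩, ?_, ?_⟩
    · simp only [mem_image, not_exists]
      rintro s ⟨hs, hfs⟩
      exact i.2 (by
        have : g.1 s = g.1 i.1 := by rw [g.2.2 s hs, hfs]
        rwa [g.2.1 this] at hs)
    · intro a b hab
      exact Subtype.ext (g.2.1 (congrArg Subtype.val hab))
    · intro a b hab
      by_cases ha : a ∈ S <;> by_cases hb : b ∈ S <;> simp only [dif_pos, dif_neg, ha, hb] at hab
      · exact hf hab
      · exact absurd (mem_image_of_mem f ha) (hab ▸ (e ⟨b, hb⟩).2)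
      · exact absurd (mem_image_of_mem f hb) (hab ▸ (e ⟨a, ha⟩).2)
      · exact congrArg Subtype.val (e.injective (Subtype.ext hab))
    · intro i hi; simp [hi]
    · intro g
      refine Subtype.ext (funext fun i => ?_)
      by_cases h : i ∈ S
      · simp [h, (g.2.2 i h).symm]
      · simp [h]
        rfl
    · intro e
      ext i
      simp [i.2]
  rw [Nat.card_congr e, Nat.card_eq_fintype_card, Fintype.card_embedding_eq]
  congr 1
  · rw [Fintype.card_subtype_compl, Fintype.card_fin]
    congr 1
    rw [Fintype.card_coe, card_image_of_injective _ hf]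
  · rw [Fintype.card_subtype_compl, Fintype.card_fin]
    congr 1
    exact Fintype.card_coe _

/-- Core inclusion–exclusion count. -/
private lemma card_avoid (q n : ℕ) (f : Fin q → Fin n) (hf : Function.Injective f) :
    ((Nat.card {g : Fin q → Fin n // Function.Injective g ∧ ∀ i, g i ≠ f i}) : ℤ)
      = gsum q n := by
  classical
  have hqn : q ≤ n := by
    have := Fintype.card_le_of_injective f hf
    simpa using this
  rw [Nat.card_eq_fintype_card, Fintype.card_subtype]
  have key : ∀ g : Fin q → Fin n,
      ((if Function.Injective g ∧ ∀ i, g i ≠ f i then (1:ℤ) else 0))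
        = if Function.Injective g then
            ∑ S ∈ (univ : Finset (Fin q)).powerset,
              if (∀ i ∈ S, g i = f i) then (-1:ℤ)^S.card else 0
          else 0 := by
    intro g
    by_cases hg : Function.Injective g
    · simp only [hg, true_and, if_true]
      have : ∑ S ∈ (univ : Finset (Fin q)).powerset,
          (if (∀ i ∈ S, g i = f i) then (-1:ℤ)^S.card else 0)
          = ∑ S ∈ (univ.filter fun i => g i = f i).powerset, (-1:ℤ)^S.card := by
        rw [← sum_filter]
        congr 1
        ext S
        simp [subset_iff]
      rw [this, Finset.sum_powerset_neg_one_pow_card]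
      by_cases h : ∀ i, g i ≠ f i
      · have he : filter (fun i => g i = f i) univ = ∅ := by
          simpa [filter_eq_empty_iff] using h
        simp [he, h]
      · have he : filter (fun i => g i = f i) univ ≠ ∅ := by
          intro hc
          exact h fun i => by simpa using (filter_eq_empty_iff.mp hc) (mem_univ i)
        simp [he, h]
    · simp [hg]
  calc (((univ : Finset (Fin q → Fin n)).filter
        fun g => Function.Injective g ∧ ∀ i, g i ≠ f i).card : ℤ)
      = ∑ g : Fin q → Fin n,
          if Function.Injective g ∧ ∀ i, g i ≠ f i then (1:ℤ) else 0 := by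
        rw [card_filter]
        push_cast
        rfl
    _ = ∑ g : Fin q → Fin n, if Function.Injective g then
            ∑ S ∈ (univ : Finset (Fin q)).powerset,
              if (∀ i ∈ S, g i = f i) then (-1:ℤ)^S.card else 0
          else 0 := Finset.sum_congr rfl fun g _ => key g
    _ = ∑ S ∈ (univ : Finset (Fin q)).powerset, (-1:ℤ)^S.card *
          ((univ.filter fun g : Fin q → Fin n =>
            Function.Injective g ∧ ∀ i ∈ S, g i = f i).card : ℤ) := by
        rw [← sum_filter, sum_comm]
        refine sum_congr rfl fun S _ => ?_
        rw [← sum_filter, filter_filter, sum_const, nsmul_eq_mul, mul_comm]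
    _ = ∑ S ∈ (univ : Finset (Fin q)).powerset,
          (-1:ℤ)^S.card * ((n - S.card).descFactorial (q - S.card) : ℤ) := by
        refine sum_congr rfl fun S _ => ?_
        congr 1
        rw [← card_extend q n f hf S, Nat.card_eq_fintype_card, Fintype.card_subtype]
    _ = gsum q n := by
        rw [sum_powerset, Finset.card_fin]
        unfold gsum
        refine sum_congr rfl fun a ha => ?_
        have haq : a ≤ q := by have := mem_range.mp ha; omega
        have han : a ≤ n := le_trans haq hqn
        have h1 : ∀ S ∈ powersetCard a (univ : Finset (Fin q)),
            (-1:ℤ)^S.card * ((n - S.card).descFactorial (q - S.card) : ℤ)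
              = (-1:ℤ)^a * ((n - a).descFactorial (q - a) : ℤ) := by
          intro S hS; rw [(mem_powersetCard.mp hS).2]
        rw [sum_congr rfl h1, sum_const, card_powersetCard, Finset.card_fin, nsmul_eq_mul,
          ← Nat.cast_sub han, descPochhammer_eval_eq_descFactorial]
        ring

private lemma card_inj (q n : ℕ) :
    Nat.card {g : Fin q → Fin n // Function.Injective g} = n.descFactorial q := by
  rw [Nat.card_congr (Equiv.subtypeInjectiveEquivEmbedding (Fin q) (Fin n)),
    Nat.card_eq_fintype_card, Fintype.card_embedding_eq, Fintype.card_fin, Fintype.card_fin]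

private def colP (q n m : ℕ) (F : Fin m → Fin q → Fin n) : Prop :=
  (∀ j, Function.Injective (F j)) ∧
    ∀ (j : ℕ) (h : j + 1 < m), ∀ i, F ⟨j + 1, h⟩ i ≠ F ⟨j, Nat.lt_of_succ_lt h⟩ i

private lemma colEquivIff (q n m : ℕ) (hm : 1 ≤ m) (hmm : m - 1 < m)
    (F : Fin (m + 1) → Fin q → Fin n) :
    colP q n (m + 1) F ↔
      colP q n m (Fin.init F) ∧ Function.Injective (F (Fin.last m)) ∧
        ∀ i, F (Fin.last m) i ≠ Fin.init F ⟨m - 1, hmm⟩ i := by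
  have hcast : ∀ (j : ℕ) (h : j < m), Fin.castSucc (⟨j, h⟩ : Fin m)
      = (⟨j, Nat.lt_succ_of_lt h⟩ : Fin (m + 1)) := fun j h => rfl
  have hlast : ∀ (j : ℕ) (hj : j + 1 = m) (h : j + 1 < m + 1),
      (⟨j + 1, h⟩ : Fin (m + 1)) = Fin.last m := fun j hj h => Fin.ext (by simpa using hj)
  constructor
  · rintro ⟨h1, h2⟩
    refine ⟨⟨fun j => h1 _, fun j h i => ?_⟩, h1 _, fun i => ?_⟩
    · have := h2 j (by omega) i
      simp only [Fin.init, hcast]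
      exact this
    · have h' : m - 1 + 1 < m + 1 := by omega
      have := h2 (m - 1) h' i
      rw [hlast (m - 1) (by omega) h'] at this
      simp only [Fin.init, hcast]
      exact this
  · rintro ⟨⟨h1, h2⟩, hg, hav⟩
    constructor
    · intro j
      induction j using Fin.lastCases with
      | last => exact hg
      | cast j' =>
        have := h1 j'
        simpa [Fin.init] using this
    · intro j h i
      rcases Nat.lt_or_ge (j + 1) m with hj | hj
      · have := h2 j hj i
        simp only [Fin.init, hcast] at this
        exact this
      · have hjm : j + 1 = m := by omega
        rw [hlast j hjm h]
        have hje : (⟨j, Nat.lt_of_succ_lt h⟩ : Fin (m + 1))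
            = Fin.castSucc ⟨m - 1, hmm⟩ := Fin.ext (by simp; omega)
        rw [hje]
        have := hav i
        simpa [Fin.init] using this

private lemma colCount (q n : ℕ) : ∀ m : ℕ, 1 ≤ m →
    (Nat.card {F : Fin m → Fin q → Fin n // colP q n m F} : ℤ)
      = (n.descFactorial q : ℤ) * (gsum q n) ^ (m - 1) := by
  intro m hm
  induction m, hm using Nat.le_induction with
  | base =>
    have e : {F : Fin 1 → Fin q → Fin n // colP q n 1 F}
        ≃ {g : Fin q → Fin n // Function.Injective g} := by
      refine ⟨fun F => ⟨F.1 0, F.2.1 0⟩, fun g => ⟨fun _ => g.1, fun _ => g.2,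
        fun j h => by omega⟩, fun F => ?_, fun g => rfl⟩
      refine Subtype.ext (funext fun j => ?_)
      rw [Subsingleton.elim (0 : Fin 1) j]
    rw [Nat.card_congr e, card_inj]
    simp
  | succ m hm ih =>
    classical
    have hmm : m - 1 < m := by omega
    have e : {F : Fin (m + 1) → Fin q → Fin n // colP q n (m + 1) F}
        ≃ Σ F : Fin m → Fin q → Fin n,
            {g : Fin q → Fin n //
              colP q n m F ∧ Function.Injective g ∧ ∀ i, g i ≠ F ⟨m - 1, hmm⟩ i} := by
      refine Equiv.trans (Equiv.subtypeEquiv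
        ((Fin.snocEquiv (fun _ => Fin q → Fin n)).symm.trans (Equiv.prodComm _ _))
        (fun F => ?_))
        (Equiv.subtypeProdEquivSigmaSubtype
          (fun (F : Fin m → Fin q → Fin n) (g : Fin q → Fin n) =>
            colP q n m F ∧ Function.Injective g ∧ ∀ i, g i ≠ F ⟨m - 1, hmm⟩ i))
      simpa using colEquivIff q n m hm hmm F
    rw [Nat.card_congr e, Nat.card_eq_fintype_card, Fintype.card_sigma]
    have hcard : ∀ F : Fin m → Fin q → Fin n,
        ((Fintype.card {g : Fin q → Fin n //
            colP q n m F ∧ Function.Injective g ∧ ∀ i, g i ≠ F ⟨m - 1, hmm⟩ i}) : ℤ)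
          = (if colP q n m F then (1:ℤ) else 0) * gsum q n := by
      intro F
      rw [← Nat.card_eq_fintype_card]
      by_cases hF : colP q n m F
      · rw [if_pos hF, one_mul,
          Nat.card_congr (Equiv.subtypeEquivRight fun g => and_iff_right hF)]
        exact card_avoid q n (F ⟨m - 1, hmm⟩) (hF.1 _)
      · rw [if_neg hF, zero_mul]
        have : IsEmpty {g : Fin q → Fin n //
            colP q n m F ∧ Function.Injective g ∧ ∀ i, g i ≠ F ⟨m - 1, hmm⟩ i} :=
          ⟨fun g => hF g.2.1⟩
        simp
    push_cast
    calc (∑ F : Fin m → Fin q → Fin n, ((Fintype.card {g : Fin q → Fin n //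
            colP q n m F ∧ Function.Injective g ∧ ∀ i, g i ≠ F ⟨m - 1, hmm⟩ i}) : ℤ))
        = ∑ F : Fin m → Fin q → Fin n, (if colP q n m F then (1:ℤ) else 0) * gsum q n :=
          Finset.sum_congr rfl fun F _ => hcard F
      _ = ((univ.filter fun F : Fin m → Fin q → Fin n => colP q n m F).card : ℤ) * gsum q n := by
          rw [← sum_mul, sum_boole]
      _ = (Nat.card {F : Fin m → Fin q → Fin n // colP q n m F} : ℤ) * gsum q n := by
          rw [Nat.card_eq_fintype_card, Fintype.card_subtype]
      _ = ((n.descFactorial q : ℤ) * (gsum q n) ^ (m - 1)) * gsum q n := by rw [ih]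
      _ = (n.descFactorial q : ℤ) * (gsum q n) ^ (m + 1 - 1) := by
          rw [mul_assoc, ← pow_succ]
          congr 2
          omega

private lemma graphEquivIff (q n m : ℕ) (f : Fin q × Fin m → Fin n) :
    (∀ u v, ((⊤ : SimpleGraph (Fin q)).boxProd (SimpleGraph.pathGraph m)).Adj u v →
        f u ≠ f v)
      ↔ colP q n m (fun j i => f (i, j)) := by
  constructor
  · intro h
    refine ⟨fun j i i' hii => ?_, fun j hj i => ?_⟩
    · by_contra hne
      exact h (i, j) (i', j)
        (SimpleGraph.boxProd_adj.mpr (Or.inl ⟨hne, rfl⟩)) hii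
    · exact h (i, ⟨j + 1, hj⟩) (i, ⟨j, Nat.lt_of_succ_lt hj⟩)
        (SimpleGraph.boxProd_adj.mpr
          (Or.inr ⟨SimpleGraph.pathGraph_adj.mpr (Or.inr rfl), rfl⟩))
  · rintro ⟨h1, h2⟩ ⟨u1, u2⟩ ⟨v1, v2⟩ hadj
    rcases SimpleGraph.boxProd_adj.mp hadj with ⟨ha, hb⟩ | ⟨ha, hb⟩
    · simp only at ha hb
      subst hb
      intro heq
      exact ha.ne (h1 u2 heq)
    · simp only at ha hb
      subst hb
      rcases SimpleGraph.pathGraph_adj.mp ha with hc | hc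
      · have hlt : u2.val + 1 < m := by have := v2.isLt; omega
        have hv : v2 = ⟨u2.val + 1, hlt⟩ := Fin.ext hc.symm
        have hu : u2 = ⟨u2.val, Nat.lt_of_succ_lt hlt⟩ := Fin.ext rfl
        intro heq
        exact h2 u2.val hlt u1 (by rw [← hv, ← hu]; exact heq.symm)
      · have hlt : v2.val + 1 < m := by have := u2.isLt; omega
        have hu : u2 = ⟨v2.val + 1, hlt⟩ := Fin.ext hc.symm
        have hv : v2 = ⟨v2.val, Nat.lt_of_succ_lt hlt⟩ := Fin.ext rfl
        intro heq
        exact h2 v2.val hlt u1 (by rw [← hv, ← hu]; exact heq)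

/-- The chromatic polynomial of `K_q × P_m` (for `m ≥ 1`) equals `(n)_q · (g_q(n))^{m-1}`,
where `g_q(n) = Σ_{a=0}^{q} (-1)^a C(q,a) (n-a)_{q-a}`. -/
theorem stmt6 (q m n : ℕ) (hm : 1 ≤ m) :
    (Nat.card {f : Fin q × Fin m → Fin n //
        ∀ u v, ((⊤ : SimpleGraph (Fin q)).boxProd (SimpleGraph.pathGraph m)).Adj u v →
          f u ≠ f v} : ℤ)
      = (descPochhammer ℤ q).eval (n : ℤ) *
          (∑ a ∈ Finset.range (q + 1),
            (-1 : ℤ) ^ a * (q.choose a : ℤ) *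
              (descPochhammer ℤ (q - a)).eval ((n : ℤ) - a)) ^ (m - 1) := by
  have e : {f : Fin q × Fin m → Fin n //
        ∀ u v, ((⊤ : SimpleGraph (Fin q)).boxProd (SimpleGraph.pathGraph m)).Adj u v →
          f u ≠ f v}
      ≃ {F : Fin m → Fin q → Fin n // colP q n m F} :=
    Equiv.subtypeEquiv
      ⟨fun f => fun j i => f (i, j), fun F => fun p => F p.2 p.1,
        fun f => rfl, fun F => rfl⟩
      (fun f => graphEquivIff q n m f)
  rw [Nat.card_congr e, colCount q n m hm,
    ← descPochhammer_eval_eq_descFactorial ℤ n q]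
  rfl
end

section
/- Let f_q(n) = c·n^{g(q)} + Σ_{r=1}^{g(q)} c_r(q) n^{g(q)−r} with constant leading coefficient c ≠ 0, and suppose for all r ≤ e the coefficient c_r(q) equals a polynomial φ_r(q). Then for any h(q) ∈ ℕ, and any 1 ≤ r ≤ e, the coefficient of n^{g(q)h(q)−r} in f_q(n)^{h(q)}/c^{h(q)} equals Σ_{s=1}^{r} C(h(q), s) Σ_{ℓ₁+⋯+ℓ_r = s, Σ j·ℓ_j = r} multinomial(s; ℓ₁,...,ℓ_r) · ∏_{j=1}^{r} (φ_j(q)/c)^{ℓ_j}. -/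
open Polynomial

/-- Truncated multinomial expansion: coefficient `r` of `Q ^ s` when `Q.coeff 0 = 0`. -/
lemma auxA (Q : Polynomial ℚ) (h0 : Q.coeff 0 = 0) (s r : ℕ) :
    (Q ^ s).coeff r = ∑ ℓ ∈ (Finset.Nat.antidiagonalTuple r s).filter
        (fun ℓ => ∑ j : Fin r, ((j : ℕ) + 1) * ℓ j = r),
      (Nat.multinomial Finset.univ ℓ : ℚ) * ∏ j : Fin r, (Q.coeff ((j : ℕ) + 1)) ^ ℓ j := by
  classical
  set Q' : Polynomial ℚ :=
    ∑ j : Fin r, Polynomial.C (Q.coeff ((j : ℕ) + 1)) * Polynomial.X ^ ((j : ℕ) + 1) with hQ'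
  have hco : ∀ i ≤ r, Q'.coeff i = Q.coeff i := by
    intro i hi
    rw [hQ', finset_sum_coeff]
    simp only [coeff_C_mul, coeff_X_pow]
    rcases Nat.eq_zero_or_pos i with rfl | hi1
    · simp [h0]
    · obtain ⟨m, rfl⟩ : ∃ m, i = m + 1 := ⟨i - 1, by omega⟩
      rw [Finset.sum_eq_single (⟨m, by omega⟩ : Fin r)]
      · simp
      · intro b _ hb
        rw [if_neg, mul_zero]
        intro hcon
        apply hb
        apply Fin.ext
        simpa using hcon.symm
      · simp
  have h1 : (Q ^ s).coeff r = (Q' ^ s).coeff r := by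
    have hd : (Polynomial.X : ℚ[X]) ^ (r + 1) ∣ Q ^ s - Q' ^ s := by
      refine dvd_trans (Polynomial.X_pow_dvd_iff.mpr fun d hd => ?_)
        (sub_dvd_pow_sub_pow Q Q' s)
      rw [coeff_sub, hco d (by omega), sub_self]
    have h2 := Polynomial.X_pow_dvd_iff.mp hd r (by omega)
    rw [coeff_sub, sub_eq_zero] at h2
    exact h2
  rw [h1, hQ', Finset.sum_pow_eq_sum_piAntidiag, finset_sum_coeff,
    Finset.piAntidiag_univ_fin_eq_antidiagonalTuple, Finset.sum_filter]
  refine Finset.sum_congr rfl fun k _ => ?_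
  have hprod : ∏ j : Fin r,
        (Polynomial.C (Q.coeff ((j : ℕ) + 1)) * Polynomial.X ^ ((j : ℕ) + 1)) ^ k j
      = Polynomial.C (∏ j : Fin r, (Q.coeff ((j : ℕ) + 1)) ^ k j)
        * Polynomial.X ^ (∑ j : Fin r, ((j : ℕ) + 1) * k j) := by
    rw [map_prod, ← Finset.prod_pow_eq_pow_sum, ← Finset.prod_mul_distrib]
    refine Finset.prod_congr rfl fun j _ => ?_
    rw [mul_pow, map_pow, pow_mul]
  rw [hprod, ← Polynomial.C_eq_natCast, ← mul_assoc, ← map_mul, Polynomial.coeff_C_mul,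
    Polynomial.coeff_X_pow]
  split_ifs with hcond hcond2 hcond2
  · rw [mul_one]
  · exact absurd hcond.symm hcond2
  · exact absurd hcond2.symm hcond
  · rw [mul_zero]

/-- Key lemma about powers of a polynomial with constant coefficient `c`. -/
lemma auxKey (P : Polynomial ℚ) (c : ℚ) (hc : c ≠ 0) (h0 : P.coeff 0 = c)
    (N r : ℕ) (hr : 1 ≤ r) :
    (P ^ N).coeff r / c ^ N
      = ∑ s ∈ Finset.Icc 1 r, (N.choose s : ℚ) *
          ∑ ℓ ∈ (Finset.Nat.antidiagonalTuple r s).filter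
              (fun ℓ => ∑ j : Fin r, ((j : ℕ) + 1) * ℓ j = r),
            (Nat.multinomial Finset.univ ℓ : ℚ) *
              ∏ j : Fin r, (P.coeff ((j : ℕ) + 1) / c) ^ ℓ j := by
  classical
  set Q : Polynomial ℚ := P - Polynomial.C c with hQ
  have hQ0 : Q.coeff 0 = 0 := by simp [hQ, h0]
  have hQj : ∀ j : ℕ, 1 ≤ j → Q.coeff j = P.coeff j := by
    intro j hj
    rw [hQ, Polynomial.coeff_sub, Polynomial.coeff_C, if_neg (by omega), sub_zero]
  have hexp : P ^ N = ∑ s ∈ Finset.range (N + 1),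
      Q ^ s * Polynomial.C c ^ (N - s) * (N.choose s : ℚ[X]) := by
    have h : P = Q + Polynomial.C c := by rw [hQ]; ring
    rw [h, add_pow]
  have hcoeff : (P ^ N).coeff r
      = ∑ s ∈ Finset.range (N + 1), (Q ^ s).coeff r * c ^ (N - s) * (N.choose s : ℚ) := by
    rw [hexp, finset_sum_coeff]
    refine Finset.sum_congr rfl fun s _ => ?_
    rw [← map_pow, ← Polynomial.C_eq_natCast, Polynomial.coeff_mul_C, Polynomial.coeff_mul_C]
  set F : ℕ → ℚ := fun s => (Q ^ s).coeff r * c ^ (N - s) * (N.choose s : ℚ) with hF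
  have hvan1 : ∀ s, s ∉ Finset.Icc 1 r → F s = 0 := by
    intro s hs
    rcases Nat.eq_zero_or_pos s with rfl | hs1
    · have h1 : ((Q : ℚ[X]) ^ 0).coeff r = 0 := by
        rw [pow_zero, Polynomial.coeff_one, if_neg (by omega)]
      show (Q ^ 0).coeff r * c ^ (N - 0) * (N.choose 0 : ℚ) = 0
      rw [h1, zero_mul, zero_mul]
    · have hrs : r < s := by simp only [Finset.mem_Icc, not_and, not_le] at hs; omega
      have hXdvd : (Polynomial.X : ℚ[X]) ^ s ∣ Q ^ s :=
        pow_dvd_pow_of_dvd (Polynomial.X_dvd_iff.mpr hQ0) s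
      have h : (Q ^ s).coeff r = 0 := Polynomial.X_pow_dvd_iff.mp hXdvd r hrs
      simp [hF, h]
  have hvan2 : ∀ s ∈ Finset.Icc 1 r, s ∉ Finset.range (N + 1) → F s = 0 := by
    intro s _ hs
    have h : N < s := by simpa using hs
    simp [hF, Nat.choose_eq_zero_of_lt h]
  have hsum : ∑ s ∈ Finset.range (N + 1), F s = ∑ s ∈ Finset.Icc 1 r, F s := by
    rw [← Finset.sum_subset (Finset.inter_subset_left (s₂ := Finset.Icc 1 r))
        (fun s hs hs2 => hvan1 s (fun h => hs2 (Finset.mem_inter.mpr ⟨hs, h⟩)))]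
    rw [← Finset.sum_subset (Finset.inter_subset_right (s₁ := Finset.range (N + 1)))
        (fun s hs hs2 => hvan2 s hs (fun h => hs2 (Finset.mem_inter.mpr ⟨h, hs⟩)))]
  rw [hcoeff, hsum, Finset.sum_div]
  refine Finset.sum_congr rfl fun s hs => ?_
  obtain ⟨hs1, hsr⟩ := Finset.mem_Icc.mp hs
  have hinner : ∑ ℓ ∈ (Finset.Nat.antidiagonalTuple r s).filter
        (fun ℓ => ∑ j : Fin r, ((j : ℕ) + 1) * ℓ j = r),
      (Nat.multinomial Finset.univ ℓ : ℚ) *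
        ∏ j : Fin r, (P.coeff ((j : ℕ) + 1) / c) ^ ℓ j
      = (Q ^ s).coeff r / c ^ s := by
    rw [auxA Q hQ0 s r, Finset.sum_div]
    refine Finset.sum_congr rfl fun ℓ hℓ => ?_
    have hmem := Finset.mem_filter.mp hℓ
    have hsumℓ : ∑ j : Fin r, ℓ j = s := Finset.Nat.mem_antidiagonalTuple.mp hmem.1
    have hprod : ∏ j : Fin r, (P.coeff ((j : ℕ) + 1) / c) ^ ℓ j
        = (∏ j : Fin r, (Q.coeff ((j : ℕ) + 1)) ^ ℓ j) / c ^ s := by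
      simp_rw [div_pow]
      rw [Finset.prod_div_distrib, Finset.prod_pow_eq_pow_sum, hsumℓ]
      congr 1
      exact Finset.prod_congr rfl fun j _ => by rw [hQj ((j : ℕ) + 1) (by omega)]
    rw [hprod, mul_div_assoc]
  rw [hinner, hF]
  rcases le_or_gt s N with hsN | hsN
  · have hcN : c ^ N = c ^ (N - s) * c ^ s := by rw [← pow_add]; congr 1; omega
    rw [hcN]
    have h1 : c ^ (N - s) ≠ 0 := pow_ne_zero _ hc
    have h2 : c ^ s ≠ 0 := pow_ne_zero _ hc
    field_simp
  · simp [hF, Nat.choose_eq_zero_of_lt hsN]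

lemma auxRevPow (p : Polynomial ℚ) (n : ℕ) : (p ^ n).reverse = p.reverse ^ n := by
  induction n with
  | zero => simp only [pow_zero, ← Polynomial.C_1, Polynomial.reverse_C]
  | succ n ih => rw [pow_succ, Polynomial.reverse_mul_of_domain, ih, pow_succ]

/-- The codegree-`r` coefficient of a polynomial regarded as having degree `d`, with the
convention that coefficients of negative powers of `n` are `0`. -/
noncomputable def codegCoeff (p : Polynomial ℚ) (d r : ℕ) : ℚ :=
  if r ≤ d then p.coeff (d - r) else 0

lemma auxCodeg (p : Polynomial ℚ) (d : ℕ) (hd : p.natDegree = d) (r : ℕ) :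
    codegCoeff p d r = p.reverse.coeff r := by
  rw [Polynomial.coeff_reverse, hd, codegCoeff]
  by_cases hrd : r ≤ d
  · rw [if_pos hrd, Polynomial.revAt_le hrd]
  · rw [if_neg hrd, Polynomial.revAt_eq_self_of_lt (by omega : d < r),
      Polynomial.coeff_eq_zero_of_natDegree_lt (by omega : p.natDegree < r)]

/-- Powers of two-level polynomials: explicit coefficient formula for
`f_q(n)^{h(q)} / c^{h(q)}` in codegree `1 ≤ r ≤ e`. -/
theorem stmt11 (g h : ℕ → ℕ) (e : ℕ) (c : ℚ) (hc0 : c ≠ 0)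
    (f : ℕ → Polynomial ℚ) (φ : ℕ → Polynomial ℚ)
    (hdeg : ∀ q, (f q).natDegree = g q)
    (hlead : ∀ q, (f q).coeff (g q) = c)
    (hcoeff : ∀ q, ∀ r ≤ e, codegCoeff (f q) (g q) r = (φ r).eval (q : ℚ)) :
    ∀ q, ∀ r, 1 ≤ r → r ≤ e →
      codegCoeff ((f q) ^ (h q)) (g q * h q) r / c ^ (h q)
        = ∑ s ∈ Finset.Icc 1 r,
            ((h q).choose s : ℚ) *
              ∑ ℓ ∈ (Finset.Nat.antidiagonalTuple r s).filter
                  (fun ℓ => ∑ j : Fin r, ((j : ℕ) + 1) * ℓ j = r),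
                (Nat.multinomial Finset.univ ℓ : ℚ) *
                  ∏ j : Fin r, ((φ ((j : ℕ) + 1)).eval (q : ℚ) / c) ^ ℓ j := by
  intro q r hr1 hre
  set N := h q with hN
  set d := g q with hd
  set p := f q with hp
  set P := p.reverse with hP
  have hlc : p.leadingCoeff = c := by
    rw [Polynomial.leadingCoeff, hdeg q]; exact hlead q
  have hP0 : P.coeff 0 = c := by rw [hP, Polynomial.coeff_zero_reverse, hlc]
  have hdegpow : (p ^ N).natDegree = d * N := by
    rw [Polynomial.natDegree_pow' (by rw [hlc]; exact pow_ne_zero _ hc0), hdeg q, mul_comm]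
  have hLHS : codegCoeff (p ^ N) (d * N) r = (P ^ N).coeff r := by
    rw [auxCodeg (p ^ N) (d * N) hdegpow r, auxRevPow]
  have hPj : ∀ j : ℕ, 1 ≤ j → j ≤ e → P.coeff j = (φ j).eval (q : ℚ) := by
    intro j hj1 hje
    rw [← auxCodeg p d (hdeg q) j]
    exact hcoeff q j hje
  rw [hLHS, auxKey P c hc0 hP0 N r hr1]
  refine Finset.sum_congr rfl fun s hs => ?_
  congr 1
  refine Finset.sum_congr rfl fun ℓ hℓ => ?_
  congr 1
  refine Finset.prod_congr rfl fun j _ => ?_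
  rw [hPj ((j : ℕ) + 1) (by omega) (by have := j.isLt; omega)]
end

section
/- For any finite graph G = (V, E), the chromatic polynomial satisfies χ_G(n) = Σ_{b ∈ L(G)} μ(0̂, b) · n^{|V| − rank(b)}, where L(G) is the bond lattice of G, μ is its Möbius function, and rank(b) is the number of vertices minus the number of connected components of the bond b. -/
open Finset

namespace Stmt12Aux

variable {V : Type*} [Fintype V] [DecidableEq V]

/-- The graph of monochromatic edges. -/
def mono (G : SimpleGraph V) {n : ℕ} (f : V → Fin n) : SimpleGraph V where
  Adj u v := G.Adj u v ∧ f u = f v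
  symm := ⟨fun u v h => ⟨h.1.symm, h.2.symm⟩⟩
  loopless := ⟨fun u h => G.loopless.irrefl u h.1⟩

noncomputable instance rdec (G' : SimpleGraph V) : DecidableRel G'.reachableSetoid.r :=
  Classical.decRel _

/-- The partition of `V` into monochromatic components. -/
noncomputable def pif (G : SimpleGraph V) {n : ℕ} (f : V → Fin n) :
    Finpartition (Finset.univ : Finset V) :=
  Finpartition.ofSetoid (mono G f).reachableSetoid

lemma mem_part_pif (G : SimpleGraph V) {n : ℕ} (f : V → Fin n) (u v : V) :
    v ∈ (pif G f).part u ↔ (mono G f).Reachable u v := by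
  exact Finpartition.mem_part_ofSetoid_iff_rel

lemma reach_color (G : SimpleGraph V) {n : ℕ} (f : V → Fin n) {u v : V}
    (h : (mono G f).Reachable u v) : f u = f v := by
  obtain ⟨w⟩ := h
  induction w with
  | nil => rfl
  | cons h p ih => exact h.2.trans ih

lemma walk_induce {G' : SimpleGraph V} {s : Set V} :
    ∀ {u v : V} (w : G'.Walk u v) (hw : ∀ x ∈ w.support, x ∈ s),
      (G'.induce s).Reachable ⟨u, hw u w.start_mem_support⟩ ⟨v, hw v w.end_mem_support⟩ := by
  intro u v w
  induction w with
  | nil => intro hw; rfl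
  | @cons a b c h p ih =>
      intro hw
      have hb : ∀ x ∈ p.support, x ∈ s := fun x hx => hw x (by simp [hx])
      refine SimpleGraph.Reachable.trans ?_ (ih hb)
      exact SimpleGraph.Adj.reachable (by simpa using h)

lemma pif_mem_B (G : SimpleGraph V) {n : ℕ} (f : V → Fin n)
    {p : Finset V} (hp : p ∈ (pif G f).parts) :
    (SimpleGraph.induce (↑p : Set V) G).Connected := by
  obtain ⟨a, ha⟩ := Finpartition.nonempty_of_mem_parts _ hp
  have hpart : (pif G f).part a = p := Finpartition.part_eq_of_mem _ hp ha
  have hmem : ∀ x, x ∈ p ↔ (mono G f).Reachable a x := by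
    intro x; rw [← hpart]; exact mem_part_pif G f a x
  have hconn : (SimpleGraph.induce (↑p : Set V) (mono G f)).Connected := by
    rw [SimpleGraph.connected_iff]
    refine ⟨?_, ⟨⟨a, by exact_mod_cast (hmem a).2 (SimpleGraph.Reachable.refl a)⟩⟩⟩
    rintro ⟨x, hx⟩ ⟨y, hy⟩
    have hxy : (mono G f).Reachable x y :=
      (((hmem x).1 (by exact_mod_cast hx)).symm.trans ((hmem y).1 (by exact_mod_cast hy)))
    obtain ⟨w⟩ := hxy
    have hsupp : ∀ z ∈ w.support, z ∈ (↑p : Set V) := by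
      intro z hz
      have hz2 : (mono G f).Reachable x z := (w.takeUntil z hz).reachable
      have : (mono G f).Reachable a z := ((hmem x).1 (by exact_mod_cast hx)).trans hz2
      exact_mod_cast (hmem z).2 this
    exact walk_induce w hsupp
  refine hconn.mono ?_
  rintro ⟨x, hx⟩ ⟨y, hy⟩ h
  exact (by simpa using h : (mono G f).Adj x y).1


lemma refines_iff (G : SimpleGraph V) {n : ℕ} (f : V → Fin n)
    (b : Finpartition (Finset.univ : Finset V))
    (hb : ∀ p ∈ b.parts, (SimpleGraph.induce (↑p : Set V) G).Connected) :
    (∀ p ∈ b.parts, ∃ t ∈ (pif G f).parts, p ⊆ t) ↔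
      (∀ p ∈ b.parts, ∀ u ∈ p, ∀ v ∈ p, f u = f v) := by
  constructor
  · intro h p hp u hu v hv
    obtain ⟨t, ht, hpt⟩ := h p hp
    have h1 : (pif G f).part u = t := Finpartition.part_eq_of_mem _ ht (hpt hu)
    have h2 : v ∈ (pif G f).part u := h1 ▸ hpt hv
    exact reach_color G f ((mem_part_pif G f u v).1 h2)
  · intro h p hp
    obtain ⟨a, ha⟩ := b.nonempty_of_mem_parts hp
    refine ⟨(pif G f).part a, (Finpartition.part_mem _).2 (mem_univ a), fun v hv => ?_⟩
    rw [mem_part_pif]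
    have hc := (hb p hp).preconnected ⟨a, by exact_mod_cast ha⟩ ⟨v, by exact_mod_cast hv⟩
    let hom : (SimpleGraph.induce (↑p : Set V) G) →g mono G f :=
      ⟨Subtype.val, fun {x y} hxy => show (mono G f).Adj x.1 y.1 from
        ⟨hxy, h p hp x.1 (by exact_mod_cast x.2) y.1 (by exact_mod_cast y.2)⟩⟩
    exact hc.map hom

lemma singleton_iff (G : SimpleGraph V) {n : ℕ} (f : V → Fin n) :
    (∀ p ∈ (pif G f).parts, p.card = 1) ↔ (∀ u v, G.Adj u v → f u ≠ f v) := by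
  constructor
  · intro h u v hadj hfe
    have hmem : v ∈ (pif G f).part u :=
      (mem_part_pif G f u v).2 (SimpleGraph.Adj.reachable ⟨hadj, hfe⟩)
    have hu : u ∈ (pif G f).part u := Finpartition.mem_part _ (mem_univ u)
    have hcard := h _ ((Finpartition.part_mem _).2 (mem_univ u))
    obtain ⟨a, hA⟩ := Finset.card_eq_one.1 hcard
    rw [hA, Finset.mem_singleton] at hmem hu
    exact hadj.ne (hu.trans hmem.symm)
  · intro h p hp
    obtain ⟨a, ha⟩ := Finpartition.nonempty_of_mem_parts _ hp
    have hpart : (pif G f).part a = p := Finpartition.part_eq_of_mem _ hp ha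
    have hsub : p = {a} := by
      apply Finset.eq_singleton_iff_unique_mem.2
      refine ⟨ha, fun x hx => ?_⟩
      have hr : (mono G f).Reachable a x := (mem_part_pif G f a x).1 (hpart ▸ hx)
      obtain ⟨w⟩ := hr
      cases w with
      | nil => rfl
      | cons e _ => exact absurd e.2 (h _ _ e.1)
    rw [hsub, Finset.card_singleton]

noncomputable def constEquiv {n : ℕ} (b : Finpartition (Finset.univ : Finset V)) :
    {f : V → Fin n // ∀ p ∈ b.parts, ∀ u ∈ p, ∀ v ∈ p, f u = f v}
      ≃ ((↥b.parts) → Fin n) where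
    toFun f p := f.1 (b.nonempty_of_mem_parts p.2).choose
    invFun g := ⟨fun v => g ⟨b.part v, b.part_mem.2 (mem_univ v)⟩, by
      intro p hp u hu v hv
      have h1 : b.part u = p := b.part_eq_of_mem hp hu
      have h2 : b.part v = p := b.part_eq_of_mem hp hv
      exact congrArg g (Subtype.ext (h1.trans h2.symm))⟩
    left_inv f := by
      refine Subtype.ext (funext fun v => ?_)
      exact f.2 _ (b.part_mem.2 (mem_univ v)) _
        (b.nonempty_of_mem_parts (b.part_mem.2 (mem_univ v))).choose_spec _
        (b.mem_part (mem_univ v))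
    right_inv g := by
      refine funext fun p => ?_
      exact congrArg g
        (Subtype.ext (b.part_eq_of_mem p.2 (b.nonempty_of_mem_parts p.2).choose_spec))

lemma count_const {n : ℕ} (b : Finpartition (Finset.univ : Finset V)) :
    Nat.card {f : V → Fin n // ∀ p ∈ b.parts, ∀ u ∈ p, ∀ v ∈ p, f u = f v}
      = n ^ b.parts.card := by
  rw [Nat.card_congr (constEquiv b), Nat.card_eq_fintype_card, Fintype.card_fun,
    Fintype.card_fin, Fintype.card_coe]

end Stmt12Aux

open Stmt12Aux

/-- Rota's Möbius-inversion formula for the chromatic polynomial: summing over the bond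
lattice `B` (partitions of `V` all of whose blocks induce connected subgraphs), for any
function `μ` satisfying the defining Möbius recurrence on `B` (with `0̂` the partition
into singletons), the number of proper `n`-colorings equals
`Σ_{b ∈ B} μ(0̂,b) n^{|V| - rank b}` where `|V| - rank b` is the number of blocks of `b`. -/
theorem stmt12 {V : Type*} [Fintype V] [DecidableEq V] (G : SimpleGraph V)
    (B : Finset (Finpartition (Finset.univ : Finset V)))
    (hB : ∀ P : Finpartition (Finset.univ : Finset V),
      P ∈ B ↔ ∀ p ∈ P.parts, (SimpleGraph.induce (↑p : Set V) G).Connected)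
    (μ : Finpartition (Finset.univ : Finset V) → ℤ)
    (hμ : ∀ b ∈ B, ∑ a ∈ B.filter (fun a => ∀ p ∈ a.parts, ∃ t ∈ b.parts, p ⊆ t), μ a
        = if ∀ p ∈ b.parts, p.card = 1 then 1 else 0)
    (n : ℕ) :
    (Nat.card {f : V → Fin n // ∀ u v, G.Adj u v → f u ≠ f v} : ℤ)
      = ∑ b ∈ B, μ b * (n : ℤ) ^ b.parts.card := by
  classical
  have hπB : ∀ f : V → Fin n, pif G f ∈ B := fun f =>
    (hB _).2 (fun p hp => pif_mem_B G f hp)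
  have step1 : ∀ b ∈ B, (n : ℤ) ^ b.parts.card
      = ∑ f : V → Fin n, (if ∀ p ∈ b.parts, ∀ u ∈ p, ∀ v ∈ p, f u = f v then (1:ℤ) else 0) := by
    intro b _
    rw [Finset.sum_boole]
    have := count_const (V := V) (n := n) b
    rw [Nat.card_eq_fintype_card, Fintype.card_subtype] at this
    rw [this]
    push_cast
    rfl
  calc (Nat.card {f : V → Fin n // ∀ u v, G.Adj u v → f u ≠ f v} : ℤ)
      = ∑ f : V → Fin n, (if ∀ u v, G.Adj u v → f u ≠ f v then (1:ℤ) else 0) := by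
        rw [Finset.sum_boole, Nat.card_eq_fintype_card, Fintype.card_subtype]
    _ = ∑ f : V → Fin n, (if ∀ p ∈ (pif G f).parts, p.card = 1 then (1:ℤ) else 0) := by
        refine Finset.sum_congr rfl fun f _ => ?_
        rw [if_congr (singleton_iff G f).symm rfl rfl]
    _ = ∑ f : V → Fin n,
          ∑ b ∈ B.filter (fun a => ∀ p ∈ a.parts, ∃ t ∈ (pif G f).parts, p ⊆ t), μ b := by
        refine Finset.sum_congr rfl fun f _ => ?_
        rw [hμ _ (hπB f)]
    _ = ∑ f : V → Fin n,
          ∑ b ∈ B.filter (fun b => ∀ p ∈ b.parts, ∀ u ∈ p, ∀ v ∈ p, f u = f v), μ b := by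
        refine Finset.sum_congr rfl fun f _ => ?_
        congr 1
        exact Finset.filter_congr fun b hb => refines_iff G f b ((hB b).1 hb)
    _ = ∑ f : V → Fin n, ∑ b ∈ B,
          (if ∀ p ∈ b.parts, ∀ u ∈ p, ∀ v ∈ p, f u = f v then μ b else 0) := by
        refine Finset.sum_congr rfl fun f _ => ?_
        rw [Finset.sum_filter]
    _ = ∑ b ∈ B, ∑ f : V → Fin n,
          μ b * (if ∀ p ∈ b.parts, ∀ u ∈ p, ∀ v ∈ p, f u = f v then (1:ℤ) else 0) := by
        rw [Finset.sum_comm]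
        exact Finset.sum_congr rfl fun b _ => Finset.sum_congr rfl fun f _ => by
          rw [mul_ite, mul_one, mul_zero]
    _ = ∑ b ∈ B, μ b * (n : ℤ) ^ b.parts.card := by
        refine Finset.sum_congr rfl fun b hb => ?_
        rw [← Finset.mul_sum, ← step1 b hb]
end
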